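/- Let 𝔄 be a complex unital Banach algebra, let A, B ∈ 𝔄 and s ∈ ℂ satisfy A·B − B·A = s·B. Then exp(A)·exp(B) = exp(e^{s}·B)·exp(A). -/

import Mathlib

open NormedSpace

theorem key (𝔄 : Type*) [NormedRing 𝔄] [NormedAlgebra ℂ 𝔄] [CompleteSpace 𝔄]
    (A B : 𝔄) (s : ℂ) (h : A * B - B * A = s • B) :
    exp A * B = (Complex.exp s • B) * exp A := by
  have hAB : A * B = B * (A + s • 1) := by
    rw [mul_add, mul_smul_comm, mul_one, ← h]; abel
  have hpow : ∀ n : ℕ, A ^ n * B = B * (A + s • 1) ^ n := by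
    intro n
    induction n with
    | zero => simp
    | succ n ih =>
        rw [pow_succ, pow_succ, mul_assoc, hAB, ← mul_assoc, ih, mul_assoc]
  have h1 : exp A * B = B * exp (A + s • 1) := by
    rw [exp_eq_tsum (𝕂 := ℂ), ← (expSeries_summable' (𝕂 := ℂ) A).tsum_mul_right,
      ← (expSeries_summable' (𝕂 := ℂ) (A + s • 1)).tsum_mul_left]
    congr 1; ext n
    rw [smul_mul_assoc, hpow n, mul_smul_comm]
  have hc : Commute A ((s : ℂ) • (1 : 𝔄)) := by
    simpa using (Commute.one_right A).smul_right s
  have h2 : exp (A + s • 1) = Complex.exp s • exp A := by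
    let +nondep : NormedAlgebra ℚ 𝔄 := .restrictScalars ℚ ℂ 𝔄
    rw [exp_add_of_commute hc]
    have : exp ((s : ℂ) • (1 : 𝔄)) = Complex.exp s • 1 := by
      have := NormedSpace.algebraMap_exp_comm (𝔸 := 𝔄) s
      rw [Algebra.algebraMap_eq_smul_one, Algebra.algebraMap_eq_smul_one] at this
      rw [← this, Complex.exp_eq_exp_ℂ]
    rw [this, mul_smul_comm, mul_one]
  rw [h1, h2, mul_smul_comm, smul_mul_assoc]

/-- In a complex unital Banach algebra, if `A·B − B·A = s·B` then
`exp(A)·exp(B) = exp(e^{s}·B)·exp(A)` (the "braiding identity"). -/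
theorem stmt_2 (𝔄 : Type*) [NormedRing 𝔄] [NormedAlgebra ℂ 𝔄] [CompleteSpace 𝔄]
    (A B : 𝔄) (s : ℂ) (h : A * B - B * A = s • B) :
    NormedSpace.exp A * NormedSpace.exp B
      = NormedSpace.exp (Complex.exp s • B) * NormedSpace.exp A := by
  have k := key 𝔄 A B s h
  have hpow : ∀ n : ℕ, exp A * B ^ n = (Complex.exp s • B) ^ n * exp A := by
    intro n
    induction n with
    | zero => simp
    | succ n ih =>
        rw [pow_succ, pow_succ, ← mul_assoc, ih, mul_assoc, k, ← mul_assoc]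
  rw [congrFun (exp_eq_tsum (𝕂 := ℂ)) B,
    congrFun (exp_eq_tsum (𝕂 := ℂ)) (Complex.exp s • B),
    ← (expSeries_summable' (𝕂 := ℂ) B).tsum_mul_left,
    ← (expSeries_summable' (𝕂 := ℂ) (Complex.exp s • B)).tsum_mul_right]
  congr 1; ext n
  rw [mul_smul_comm, hpow n, smul_mul_assoc]
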